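/- arXiv:1306.0740 — 7 statements merged into one kernel-verified Lean document; each statement's English description precedes it below -/
import Mathlib

section
/- For every positive integer k, we have √(2πk)·e^{-k}·k^k·e^{1/(12k+1)} < k! < √(2πk)·e^{-k}·k^k·e^{1/(12k)}. -/
open Real Filter Nat Stirling
open scoped Topology

namespace RobbinsAux

noncomputable def g (m : ℕ) : ℝ := Real.log (stirlingSeq (m + 1))

lemma inv_geo_eq (x : ℝ) (hx : 1 < x) :
    ((1:ℝ)/x)^2/3 * (1 - ((1:ℝ)/x)^2)⁻¹ = 1/(3*(x^2-1)) := by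
  have h0 : x ≠ 0 := by nlinarith
  have h1 : x^2 - 1 ≠ 0 := by nlinarith
  have h2 : 1 - ((1:ℝ)/x)^2 = (x^2-1)/x^2 := by field_simp
  rw [h2]
  field_simp

lemma inv_geo_eq' (x : ℝ) (hx : 1 < x) :
    ((1:ℝ)/x)^2/3 * (1 - ((1:ℝ)/x)^2/3)⁻¹ = 1/(3*x^2-1) := by
  have h0 : x ≠ 0 := by nlinarith
  have h1 : 3*x^2 - 1 ≠ 0 := by nlinarith
  have h2 : 1 - ((1:ℝ)/x)^2/3 = (3*x^2-1)/(3*x^2) := by field_simp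
  rw [h2, inv_div]
  field_simp

lemma x_gt_one (m : ℕ) : (1:ℝ) < 2 * ((m:ℝ) + 1) + 1 := by
  have : (0:ℝ) ≤ (m:ℝ) := Nat.cast_nonneg m
  nlinarith

lemma q_pos (m : ℕ) : (0:ℝ) < ((1 / (2 * ((m:ℝ) + 1) + 1)) ^ 2) := by
  have := x_gt_one m; positivity

lemma q_lt_one (m : ℕ) : ((1 / (2 * ((m:ℝ) + 1) + 1)) ^ 2) < 1 := by
  rw [one_div, inv_pow]
  exact inv_lt_one_of_one_lt₀ (one_lt_pow₀ (x_gt_one m) two_ne_zero)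

lemma hasSum_diff (m : ℕ) :
    HasSum (fun j : ℕ => (1 : ℝ) / (2 * (j:ℝ) + 3) * ((1 / (2 * ((m:ℝ) + 1) + 1)) ^ 2) ^ (j + 1))
      (g m - g (m+1)) := by
  have := log_stirlingSeq_diff_hasSum m
  convert this using 2 with j
  push_cast
  ring_nf
  all_goals rfl

lemma diff_lt (m : ℕ) :
    g m - g (m+1) < 1 / (12 * ((m:ℝ)+1)) - 1 / (12 * ((m:ℝ)+2)) := by
  set q : ℝ := (1 / (2 * ((m:ℝ) + 1) + 1)) ^ 2 with hq
  have hq0 := q_pos m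
  have hq1 := q_lt_one m
  have hgeo : HasSum (fun j : ℕ => (1/3 : ℝ) * q ^ (j+1)) (q / 3 * (1 - q)⁻¹) := by
    have := (hasSum_geometric_of_lt_one hq0.le hq1).mul_left (q / 3)
    convert this using 1
    ext j; ring
    all_goals (ext j; simp only [hq]; ring)
  have hlt : g m - g (m+1) < q / 3 * (1 - q)⁻¹ := by
    refine hasSum_lt (i := 1) (fun j => ?_) ?_ (hasSum_diff m) hgeo
    · refine mul_le_mul_of_nonneg_right ?_ (by positivity)
      rw [div_le_div_iff₀ (by positivity) (by norm_num)]
      have : (0:ℝ) ≤ (j:ℝ) := Nat.cast_nonneg j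
      nlinarith
    · show (1:ℝ) / (2 * ((1:ℕ):ℝ) + 3) * q ^ (1+1) < 1/3 * q ^ (1+1)
      have hqq : (0:ℝ) < q ^ (1+1) := by positivity
      have h5 : (1:ℝ) / (2 * ((1:ℕ):ℝ) + 3) = 1/5 := by norm_num
      rw [h5]; nlinarith
  refine hlt.trans_le (le_of_eq ?_)
  rw [hq, inv_geo_eq _ (x_gt_one m)]
  have hm : (0:ℝ) ≤ (m:ℝ) := Nat.cast_nonneg m
  rw [div_sub_div _ _ (by nlinarith) (by nlinarith), div_eq_div_iff (by nlinarith) (by nlinarith)]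
  ring

lemma lt_diff (m : ℕ) :
    1 / (12 * ((m:ℝ)+1) + 1) - 1 / (12 * ((m:ℝ)+2) + 1) < g m - g (m+1) := by
  set q : ℝ := (1 / (2 * ((m:ℝ) + 1) + 1)) ^ 2 with hq
  have hq0 := q_pos m
  have hq1 := q_lt_one m
  have hgeo : HasSum (fun j : ℕ => (q/3 : ℝ) ^ (j+1)) (q / 3 * (1 - q/3)⁻¹) := by
    have := (hasSum_geometric_of_lt_one (by positivity) (by nlinarith : q/3 < 1)).mul_left (q / 3)
    convert this using 1
    ext j; ring
    all_goals (ext j; simp only [hq]; ring)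
  have hle : q / 3 * (1 - q/3)⁻¹ ≤ g m - g (m+1) := by
    refine hasSum_le (fun j => ?_) hgeo (hasSum_diff m)
    have h3 : (2 * (j:ℝ) + 3) ≤ 3 ^ (j+1) := by
      induction j with
      | zero => norm_num
      | succ n ih =>
        push_cast at ih ⊢
        have h0 : (1:ℝ) ≤ 3 ^ (n+1) := one_le_pow₀ (by norm_num)
        calc (2 * ((n:ℝ)+1) + 3) = (2 * (n:ℝ) + 3) + 2 := by ring
        _ ≤ 3 ^ (n+1) + 2 := by linarith
        _ ≤ 3 ^ (n+1) + 2 * 3 ^ (n+1) := by linarith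
        _ = 3 ^ (n+1+1) := by ring
    have hpos : (0:ℝ) < 2 * (j:ℝ) + 3 := by positivity
    have h1 : (q/3:ℝ)^(j+1) = (1 / 3^(j+1)) * q^(j+1) := by rw [div_pow]; ring
    rw [h1]
    exact mul_le_mul_of_nonneg_right (one_div_le_one_div_of_le hpos h3) (by positivity)
  refine lt_of_lt_of_le ?_ hle
  rw [hq, inv_geo_eq' _ (x_gt_one m)]
  have hm : (0:ℝ) ≤ (m:ℝ) := Nat.cast_nonneg m
  rw [div_sub_div _ _ (by nlinarith) (by nlinarith), div_lt_div_iff₀ (by nlinarith) (by nlinarith)]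
  nlinarith

lemma tendsto_g : Tendsto g atTop (𝓝 (Real.log (Real.sqrt π))) := by
  have h1 : Tendsto (fun m : ℕ => stirlingSeq (m + 1)) atTop (𝓝 (Real.sqrt π)) :=
    (tendsto_add_atTop_iff_nat 1).mpr tendsto_stirlingSeq_sqrt_pi
  exact h1.log (ne_of_gt (Real.sqrt_pos.mpr Real.pi_pos))

lemma g_lt (m : ℕ) : g m < Real.log (Real.sqrt π) + 1 / (12 * ((m:ℝ)+1)) := by
  set L := Real.log (Real.sqrt π)
  set u : ℕ → ℝ := fun m => g m - 1 / (12 * ((m:ℝ)+1)) with hu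
  have hmono : StrictMono u := by
    apply strictMono_nat_of_lt_succ
    intro n
    have := diff_lt n
    simp only [hu]
    push_cast
    have e : (12*((n:ℝ)+1+1)) = 12*((n:ℝ)+2) := by ring
    rw [e]
    linarith
  have hlim : Tendsto u atTop (𝓝 L) := by
    have h12 : Tendsto (fun m : ℕ => 12*((m:ℝ)+1)) atTop atTop :=
      Tendsto.const_mul_atTop (by norm_num)
        (tendsto_atTop_add_const_right atTop 1 (tendsto_natCast_atTop_atTop (R := ℝ)))
    have h0 : Tendsto (fun m : ℕ => 1 / (12 * ((m:ℝ)+1))) atTop (𝓝 0) := by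
      simpa only [one_div, Function.comp_def] using tendsto_inv_atTop_zero.comp h12
    have h := tendsto_g.sub h0
    rw [sub_zero] at h
    exact h
  have : u m < L := lt_of_lt_of_le (hmono (lt_add_one m)) (hmono.monotone.ge_of_tendsto hlim (m+1))
  simp only [hu] at this
  linarith

lemma lt_g (m : ℕ) : Real.log (Real.sqrt π) + 1 / (12 * ((m:ℝ)+1) + 1) < g m := by
  set L := Real.log (Real.sqrt π)
  set v : ℕ → ℝ := fun m => g m - 1 / (12 * ((m:ℝ)+1) + 1) with hv
  have hmono : StrictAnti v := by
    apply strictAnti_nat_of_succ_lt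
    intro n
    have := lt_diff n
    simp only [hv]
    push_cast
    have e : (12*((n:ℝ)+1+1)+1) = 12*((n:ℝ)+2)+1 := by ring
    rw [e]
    linarith
  have hlim : Tendsto v atTop (𝓝 L) := by
    have h12 : Tendsto (fun m : ℕ => 12*((m:ℝ)+1) + 1) atTop atTop :=
      tendsto_atTop_add_const_right atTop 1
        (Tendsto.const_mul_atTop (by norm_num)
          (tendsto_atTop_add_const_right atTop 1 (tendsto_natCast_atTop_atTop (R := ℝ))))
    have h0 : Tendsto (fun m : ℕ => 1 / (12 * ((m:ℝ)+1) + 1)) atTop (𝓝 0) := by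
      simpa only [one_div, Function.comp_def] using tendsto_inv_atTop_zero.comp h12
    have h := tendsto_g.sub h0
    rw [sub_zero] at h
    exact h
  have : L < v m := lt_of_le_of_lt (hmono.antitone.le_of_tendsto hlim (m+1)) (hmono (lt_add_one m))
  simp only [hv] at this
  linarith

end RobbinsAux

theorem stmt_2 (k : ℕ) (hk : 0 < k) :
    Real.sqrt (2 * Real.pi * k) * Real.exp (-(k : ℝ)) * (k : ℝ) ^ k *
        Real.exp (1 / (12 * (k : ℝ) + 1)) < (Nat.factorial k : ℝ) ∧
    (Nat.factorial k : ℝ) <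
      Real.sqrt (2 * Real.pi * k) * Real.exp (-(k : ℝ)) * (k : ℝ) ^ k *
        Real.exp (1 / (12 * (k : ℝ))) := by
  obtain ⟨m, rfl⟩ := Nat.exists_eq_succ_of_ne_zero hk.ne'
  have hmc : ((m+1 : ℕ) : ℝ) = (m:ℝ) + 1 := by push_cast; ring
  have hkpos : (0:ℝ) < ((m+1 : ℕ) : ℝ) := by rw [hmc]; positivity
  -- the log bounds
  have hlt := RobbinsAux.lt_g m
  have hgt := RobbinsAux.g_lt m
  unfold RobbinsAux.g at hlt hgt
  set n : ℕ := m + 1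
  -- stirlingSeq n = n! / D
  set D : ℝ := Real.sqrt (2 * (n:ℝ)) * ((n:ℝ) / Real.exp 1) ^ n with hD
  have hDpos : 0 < D := by
    rw [hD]
    have : (0:ℝ) < (n:ℝ) := hkpos
    positivity
  have hfac : (Nat.factorial n : ℝ) = stirlingSeq n * D := by
    rw [stirlingSeq, hD]
    field_simp
  have hSpos : 0 < stirlingSeq n := stirlingSeq'_pos m
  -- key identity: √(2πn) * exp(-n) * n^n = √π * D
  have hid : Real.sqrt (2 * Real.pi * n) * Real.exp (-(n:ℝ)) * (n:ℝ) ^ n = Real.sqrt π * D := by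
    have h1 : Real.sqrt (2 * Real.pi * n) = Real.sqrt π * Real.sqrt (2 * n) := by
      rw [← Real.sqrt_mul Real.pi_pos.le]
      ring_nf
    have h2 : ((n:ℝ) / Real.exp 1) ^ n = (n:ℝ) ^ n * Real.exp (-(n:ℝ)) := by
      rw [div_pow, Real.exp_neg, ← Real.exp_nat_mul]
      simp [div_eq_mul_inv]
    rw [hD, h1, h2]
    ring
  constructor
  · -- lower bound
    have h1 : Real.sqrt π * Real.exp (1 / (12 * (n:ℝ) + 1)) < stirlingSeq n := by
      have := Real.exp_lt_exp.mpr hlt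
      rwa [Real.exp_add, Real.exp_log (Real.sqrt_pos.mpr Real.pi_pos), Real.exp_log hSpos,
        ← hmc] at this
    calc Real.sqrt (2 * Real.pi * n) * Real.exp (-(n:ℝ)) * (n:ℝ) ^ n *
          Real.exp (1 / (12 * (n:ℝ) + 1))
        = (Real.sqrt π * Real.exp (1 / (12 * (n:ℝ) + 1))) * D := by rw [hid]; ring
      _ < stirlingSeq n * D := by
          exact mul_lt_mul_of_pos_right h1 hDpos
      _ = (Nat.factorial n : ℝ) := hfac.symm
  · -- upper bound
    have h1 : stirlingSeq n < Real.sqrt π * Real.exp (1 / (12 * (n:ℝ))) := by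
      have := Real.exp_lt_exp.mpr hgt
      rwa [Real.exp_add, Real.exp_log (Real.sqrt_pos.mpr Real.pi_pos), Real.exp_log hSpos,
        ← hmc] at this
    calc (Nat.factorial n : ℝ) = stirlingSeq n * D := hfac
      _ < (Real.sqrt π * Real.exp (1 / (12 * (n:ℝ)))) * D := mul_lt_mul_of_pos_right h1 hDpos
      _ = Real.sqrt (2 * Real.pi * n) * Real.exp (-(n:ℝ)) * (n:ℝ) ^ n *
          Real.exp (1 / (12 * (n:ℝ))) := by rw [hid]; ring
end

section
/- Let m, d, k, t be positive integers with gcd(m,d) = 1, m > k·d, and t < k. Write Δ(m,d,k) = m(m+d)···(m+(k-1)d). If the number of distinct prime divisors ω(Δ(m,d,k)) is at most t, then m^{k-t} ≤ (k-1)! · ∏_{p | d} p^{-ord_p((k-1)!)}. -/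
open Nat Finset

private lemma ap_count (m d k q : ℕ) (hq : 0 < q) (hqd : Nat.Coprime q d) :
    ((Finset.range k).filter (fun i => q ∣ m + i * d)).card ≤ (k - 1) / q + 1 := by
  classical
  refine le_trans (Finset.card_le_card_of_injOn (t := Finset.range ((k-1)/q+1))
    (fun i => i / q) ?_ ?_) (le_of_eq (Finset.card_range _))
  · intro i hi
    simp only [Finset.mem_coe, Finset.mem_filter, Finset.mem_range] at hi
    simp only [Finset.mem_coe, Finset.mem_range]
    have h1 : i ≤ k - 1 := by omega
    have h2 := Nat.div_le_div_right (c := q) h1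
    omega
  · have key : ∀ a b : ℕ, a ≤ b → q ∣ m + a * d → q ∣ m + b * d → a / q = b / q → a = b := by
      intro a b hab ha hb hdiv
      have hdd : q ∣ (b - a) * d := by
        have h : (b - a) * d = (m + b * d) - (m + a * d) := by
          rw [Nat.sub_mul]
          have : a * d ≤ b * d := Nat.mul_le_mul_right d hab
          omega
        rw [h]
        exact Nat.dvd_sub hb ha
      have hba : q ∣ b - a := hqd.dvd_of_dvd_mul_right hdd
      have hlt : b - a < q := by
        by_contra hge
        push_neg at hge
        have hab' : a + q ≤ b := by omega
        have h3 : a / q + 1 ≤ b / q := by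
          have h4 := Nat.div_le_div_right (c := q) hab'
          rwa [Nat.add_div_right _ hq] at h4
        omega
      have := Nat.eq_zero_of_dvd_of_lt hba
      omega
    intro i1 h1 i2 h2 heq
    simp only [Finset.coe_filter, Set.mem_setOf_eq, Finset.mem_range] at h1 h2
    rcases le_total i1 i2 with h | h
    · exact key i1 i2 h h1.2 h2.2 heq
    · exact (key i2 i1 h h2.2 h1.2 heq.symm).symm

private lemma ord_count {p n b : ℕ} (hp : p.Prime) (hn : n ≠ 0)
    (hb : n.factorization p < b) :
    n.factorization p = ((Finset.Ico 1 b).filter (fun j => p ^ j ∣ n)).card := by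
  classical
  have h : (Finset.Ico 1 b).filter (fun j => p ^ j ∣ n)
      = Finset.Ico 1 (n.factorization p + 1) := by
    ext j
    simp only [Finset.mem_filter, Finset.mem_Ico]
    rw [hp.pow_dvd_iff_le_factorization hn]
    omega
  rw [h, Nat.card_Ico]
  omega

theorem stmt_5 (m d k t : ℕ) (hm : 0 < m) (hd : 0 < d) (hk : 0 < k) (ht : 0 < t)
    (hgcd : Nat.gcd m d = 1) (hmk : m > k * d) (htk : t < k)
    (hω : (∏ i ∈ Finset.range k, (m + i * d)).primeFactors.card ≤ t) :
    (m : ℝ) ^ (k - t) ≤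
      (Nat.factorial (k - 1) : ℝ) *
        ∏ p ∈ d.primeFactors, (p : ℝ) ^ (-((Nat.factorial (k - 1)).factorization p : ℤ)) := by
  classical
  set Δ := ∏ i ∈ Finset.range k, (m + i * d) with hΔdef
  have hfac_pos : ∀ i : ℕ, 0 < m + i * d := fun i => by positivity
  have hΔ0 : Δ ≠ 0 := Finset.prod_ne_zero_iff.mpr (fun i _ => (hfac_pos i).ne')
  have hrange : (Finset.range k).Nonempty := ⟨0, Finset.mem_range.mpr hk⟩
  have hex : ∀ p : ℕ, ∃ i ∈ Finset.range k, ∀ i' ∈ Finset.range k,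
      (m + i' * d).factorization p ≤ (m + i * d).factorization p := fun p =>
    Finset.exists_max_image _ _ hrange
  choose g hg1 hg2 using hex
  set S : Finset ℕ := Δ.primeFactors.image g with hSdef
  have hScard : S.card ≤ t := le_trans Finset.card_image_le hω
  have hSsub : S ⊆ Finset.range k := by
    intro i hi
    simp only [hSdef, Finset.mem_image] at hi
    obtain ⟨p, _, rfl⟩ := hi
    exact hg1 p
  set A := Finset.range k \ S with hAdef
  have hkm : k < m := by
    have h1 : k ≤ k * d := Nat.le_mul_of_pos_right k hd
    omega
  -- primes dividing d divide no factor
  have hmd : ∀ p : ℕ, p.Prime → p ∣ d → ∀ i : ℕ, ¬ p ∣ (m + i * d) := by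
    intro p hp hpd i hpi
    have hpm : p ∣ m := by
      have h1 : p ∣ i * d := Dvd.dvd.mul_left hpd i
      have h2 : m = (m + i * d) - i * d := by omega
      rw [h2]
      exact Nat.dvd_sub hpi h1
    have : p ∣ 1 := hgcd ▸ Nat.dvd_gcd hpm hpd
    exact Nat.Prime.one_lt hp |>.ne' (Nat.dvd_one.mp this)
  -- key counting bound for primes not dividing d
  have key : ∀ p : ℕ, p.Prime → ¬ p ∣ d →
      ∑ i ∈ A, (m + i * d).factorization p ≤ ((k-1)!).factorization p := by
    intro p hp hpd
    by_cases hpΔ : p ∈ Δ.primeFactors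
    · set b := m + k * d with hbdef
      have hordlt : ∀ i ∈ Finset.range k, (m + i * d).factorization p < b := by
        intro i hi
        have h1 := Nat.factorization_lt (n := m + i * d) p (hfac_pos i).ne'
        have h2 : i * d ≤ k * d := Nat.mul_le_mul_right d (Finset.mem_range.mp hi).le
        omega
      have step1 : ∑ i ∈ A, (m + i * d).factorization p
          = ∑ i ∈ A, ((Finset.Ico 1 b).filter (fun j => p ^ j ∣ (m + i * d))).card := by
        refine Finset.sum_congr rfl (fun i hi => ?_)
        exact ord_count hp (hfac_pos i).ne' (hordlt i (Finset.mem_sdiff.mp hi).1)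
      rw [step1]
      have step2 : ∀ i ∈ A, ((Finset.Ico 1 b).filter (fun j => p ^ j ∣ (m + i * d))).card
          = ∑ j ∈ Finset.Ico 1 b, if p ^ j ∣ (m + i * d) then 1 else 0 := by
        intro i _
        rw [Finset.card_filter]
      rw [Finset.sum_congr rfl step2, Finset.sum_comm]
      have hgS : g p ∈ S := Finset.mem_image_of_mem g hpΔ
      have step3 : ∀ j ∈ Finset.Ico 1 b,
          (∑ i ∈ A, if p ^ j ∣ (m + i * d) then 1 else 0) ≤ (k-1) / p ^ j := by
        intro j hj
        rw [← Finset.card_filter]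
        set B := (Finset.range k).filter (fun i => p ^ j ∣ m + i * d) with hBdef
        have hcop : Nat.Coprime (p ^ j) d :=
          Nat.Coprime.pow_left j ((Nat.Prime.coprime_iff_not_dvd hp).mpr hpd)
        have hBcard : B.card ≤ (k-1) / p ^ j + 1 :=
          ap_count m d k (p ^ j) (pow_pos hp.pos j) hcop
        rcases B.eq_empty_or_nonempty with hB | hB
        · have hsub : A.filter (fun i => p ^ j ∣ (m + i * d)) ⊆ B := by
            intro i hi
            simp only [Finset.mem_filter, hBdef] at hi ⊢
            exact ⟨(Finset.mem_sdiff.mp hi.1).1, hi.2⟩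
          have hv : A.filter (fun i => p ^ j ∣ (m + i * d)) = ∅ :=
            Finset.subset_empty.mp (hB ▸ hsub)
          simp [hv]
        · obtain ⟨i0, hi0⟩ := hB
          simp only [hBdef, Finset.mem_filter] at hi0
          have hjle : j ≤ (m + i0 * d).factorization p :=
            (hp.pow_dvd_iff_le_factorization (hfac_pos i0).ne').mp hi0.2
          have hgle : j ≤ (m + g p * d).factorization p :=
            le_trans hjle (hg2 p i0 hi0.1)
          have hgB : g p ∈ B := by
            simp only [hBdef, Finset.mem_filter]
            exact ⟨hg1 p, (hp.pow_dvd_iff_le_factorization (hfac_pos (g p)).ne').mpr hgle⟩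
          have hsub : A.filter (fun i => p ^ j ∣ (m + i * d)) ⊆ B.erase (g p) := by
            intro i hi
            simp only [Finset.mem_filter] at hi
            have hiA := Finset.mem_sdiff.mp hi.1
            refine Finset.mem_erase.mpr ⟨?_, ?_⟩
            · rintro rfl; exact hiA.2 hgS
            · simp only [hBdef, Finset.mem_filter]
              exact ⟨hiA.1, hi.2⟩
          have h1 := Finset.card_le_card hsub
          rw [Finset.card_erase_of_mem hgB] at h1
          have h2 : B.card - 1 ≤ (k-1) / p ^ j := Nat.sub_le_iff_le_add.mpr hBcard
          exact le_trans h1 h2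
      calc ∑ j ∈ Finset.Ico 1 b, ∑ i ∈ A, (if p ^ j ∣ (m + i * d) then 1 else 0)
          ≤ ∑ j ∈ Finset.Ico 1 b, (k-1) / p ^ j := Finset.sum_le_sum step3
        _ = ((k-1)!).factorization p := by
            haveI : Fact p.Prime := ⟨hp⟩
            rw [Nat.factorization_def _ hp]
            rw [padicValNat_factorial (b := b) ?_]
            have := Nat.log_le_self p (k-1)
            omega
    · have hz : ∀ i ∈ A, (m + i * d).factorization p = 0 := by
        intro i hi
        have hiA : i ∈ Finset.range k := (Finset.mem_sdiff.mp hi).1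
        have hnd : ¬ p ∣ (m + i * d) := by
          intro hdvd
          exact hpΔ (Nat.mem_primeFactors.mpr
            ⟨hp, hdvd.trans (Finset.dvd_prod_of_mem _ hiA), hΔ0⟩)
        exact Nat.factorization_eq_zero_of_not_dvd hnd
      rw [Finset.sum_eq_zero hz]
      exact Nat.zero_le _
  -- the discarded factor
  set D := ∏ p ∈ d.primeFactors, p ^ ((k-1)!.factorization p) with hDdef
  have hD0 : D ≠ 0 := Finset.prod_ne_zero_iff.mpr
    (fun p hp => pow_ne_zero _ (Nat.pos_of_mem_primeFactors hp).ne')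
  have hfact0 : (k-1)! ≠ 0 := Nat.factorial_ne_zero _
  have hP0 : (∏ i ∈ A, (m + i * d)) ≠ 0 :=
    Finset.prod_ne_zero_iff.mpr (fun i _ => (hfac_pos i).ne')
  have hdvd : (∏ i ∈ A, (m + i * d)) * D ∣ (k-1)! := by
    rw [← Nat.factorization_le_iff_dvd (mul_ne_zero hP0 hD0) hfact0]
    rw [Finsupp.le_def]
    intro p
    rw [Nat.factorization_mul hP0 hD0, Finsupp.add_apply]
    have hprodfac : (∏ i ∈ A, (m + i * d)).factorization p
        = ∑ i ∈ A, (m + i * d).factorization p := by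
      rw [Nat.factorization_prod (fun i _ => (hfac_pos i).ne')]
      rw [Finset.sum_apply']
    have hDfac : D.factorization p
        = if p ∈ d.primeFactors then (k-1)!.factorization p else 0 := by
      rw [hDdef, Nat.factorization_prod
        (fun q hq => pow_ne_zero _ (Nat.pos_of_mem_primeFactors hq).ne')]
      rw [Finset.sum_apply']
      rw [Finset.sum_congr rfl (fun q hq => by
        rw [(Nat.prime_of_mem_primeFactors hq).factorization_pow, Finsupp.single_apply])]
      exact Finset.sum_ite_eq' _ _ _
    rw [hprodfac, hDfac]
    by_cases hp : p.Prime
    · by_cases hpd : p ∣ d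
      · have h1 : ∀ i ∈ A, (m + i * d).factorization p = 0 := fun i _ =>
          Nat.factorization_eq_zero_of_not_dvd (hmd p hp hpd i)
        rw [Finset.sum_eq_zero h1]
        have : p ∈ d.primeFactors := Nat.mem_primeFactors.mpr ⟨hp, hpd, hd.ne'⟩
        simp [this]
      · have : p ∉ d.primeFactors := fun h => hpd (Nat.dvd_of_mem_primeFactors h)
        simp only [this, if_false, add_zero]
        exact key p hp hpd
    · have h1 : ∀ i ∈ A, (m + i * d).factorization p = 0 := fun i _ =>
        Nat.factorization_eq_zero_of_not_prime _ hp
      have h2 : p ∉ d.primeFactors := fun h => hp (Nat.prime_of_mem_primeFactors h)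
      rw [Finset.sum_eq_zero h1]
      simp [h2]
  have hineq : m ^ (k - t) * D ≤ (k-1)! := by
    refine le_trans ?_ (Nat.le_of_dvd (Nat.factorial_pos _) hdvd)
    apply Nat.mul_le_mul_right
    have hcard : k - t ≤ A.card := by
      rw [hAdef, Finset.card_sdiff_of_subset hSsub, Finset.card_range]
      omega
    calc m ^ (k - t) ≤ m ^ A.card := Nat.pow_le_pow_right hm hcard
      _ ≤ ∏ i ∈ A, (m + i * d) :=
          Finset.pow_card_le_prod _ _ _ (fun i _ => Nat.le_add_right m (i * d))
  -- conversion to the real statement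
  have hDposR : (0:ℝ) < (D:ℝ) := by exact_mod_cast Nat.pos_of_ne_zero hD0
  have hprodR : (∏ p ∈ d.primeFactors, (p : ℝ) ^ (-(((k-1)!.factorization p : ℕ) : ℤ)))
      = ((D:ℝ))⁻¹ := by
    rw [hDdef]
    push_cast
    rw [← Finset.prod_inv_distrib]
    refine Finset.prod_congr rfl (fun p hp => ?_)
    rw [zpow_neg, zpow_natCast]
  show (m : ℝ) ^ (k - t) ≤ ((k-1)! : ℝ) * ∏ p ∈ d.primeFactors, (p : ℝ) ^ (-(((k-1)!.factorization p : ℕ) : ℤ))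
  rw [hprodR, ← div_eq_mul_inv, le_div_iff₀ hDposR]
  calc ((m:ℝ)) ^ (k - t) * (D:ℝ) = ((m ^ (k - t) * D : ℕ) : ℝ) := by push_cast; ring
    _ ≤ (((k-1)! : ℕ) : ℝ) := by exact_mod_cast hineq
end

section
/- Let d ≥ 2, α with 1 ≤ α < d and gcd(α,d) = 1, and k ≥ 1. Let Δ_k = α(α+d)···(α+(k-1)d). If p is a prime with p > d and p ∤ Δ_k, then p > kd/(d-1). -/
theorem stmt_9 (d α k p : ℕ) (hd : 2 ≤ d) (hα1 : 1 ≤ α) (hα2 : α < d)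
    (hgcd : Nat.gcd α d = 1) (hk : 1 ≤ k) (hp : p.Prime) (hpd : p > d)
    (hnd : ¬ p ∣ ∏ i ∈ Finset.range k, (α + i * d)) :
    (p : ℝ) > (k : ℝ) * d / ((d : ℝ) - 1) := by
  by_contra hcon
  push_neg at hcon
  have hd1 : (0:ℝ) < (d:ℝ) - 1 := by
    have : (2:ℝ) ≤ (d:ℝ) := by exact_mod_cast hd
    linarith
  rw [le_div_iff₀ hd1] at hcon
  obtain ⟨c, rfl⟩ : ∃ c, d = c + 1 := ⟨d - 1, by omega⟩
  have hnat : p * c ≤ k * (c + 1) := by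
    have h : ((p * c : ℕ) : ℝ) ≤ ((k * (c+1) : ℕ) : ℝ) := by push_cast at hcon ⊢; linarith
    exact_mod_cast h
  haveI : Fact p.Prime := ⟨hp⟩
  have hdp : ((c + 1 : ℕ) : ZMod p) ≠ 0 := by
    intro h
    have hdvd := (ZMod.natCast_eq_zero_iff (c+1) p).mp h
    have := Nat.le_of_dvd (by omega) hdvd
    omega
  set x : ZMod p := (-(α : ZMod p)) * ((c + 1 : ℕ) : ZMod p)⁻¹ with hx
  set i := x.val with hi
  have hip : i < p := ZMod.val_lt x
  have hzero : ((α + i * (c + 1) : ℕ) : ZMod p) = 0 := by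
    push_cast
    rw [ZMod.natCast_val, ZMod.cast_id]
    have : (x : ZMod p) * ((c + 1 : ℕ) : ZMod p) = -(α : ZMod p) := by
      rw [hx, mul_assoc, inv_mul_cancel₀ hdp, mul_one]
    push_cast at this
    linear_combination this
  have hdvd : p ∣ α + i * (c + 1) := (ZMod.natCast_eq_zero_iff _ p).mp hzero
  obtain ⟨m, hm⟩ := hdvd
  have hm1 : 1 ≤ m := by nlinarith
  have hmd : m ≤ c := by nlinarith
  have hik : i < k := by nlinarith
  exact hnd (dvd_trans ⟨m, hm⟩ (Finset.dvd_prod_of_mem _ (Finset.mem_range.mpr hik)))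
end

section
/- Let d ≥ 2, α with 1 ≤ α < d, gcd(α,d) = 1, and let p be a prime with p > d. Let j₀ be minimal with p | α + (j₀-1)d and set l₀ = (α+(j₀-1)d)/p. If j ≥ j₀ satisfies p | α + (j-1)d, then j = j₀ + p·s for some integer s ≥ 0, and ord_p(α(α+d)···(α+(j-1)d)) = s + 1 + ord_p(l₀(l₀+d)···(l₀+sd)). -/
theorem stmt_11 (d α p j₀ l₀ j : ℕ) (hd : 2 ≤ d) (hα1 : 1 ≤ α) (hα2 : α < d)
    (hgcd : Nat.gcd α d = 1) (hp : p.Prime) (hpd : p > d)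
    (hj₀pos : 0 < j₀) (hj₀div : p ∣ α + (j₀ - 1) * d)
    (hj₀min : ∀ j' : ℕ, 0 < j' → p ∣ α + (j' - 1) * d → j₀ ≤ j')
    (hl₀ : α + (j₀ - 1) * d = p * l₀)
    (hj : j₀ ≤ j) (hjdiv : p ∣ α + (j - 1) * d) :
    ∃ s : ℕ, j = j₀ + p * s ∧
      (∏ i ∈ Finset.range j, (α + i * d)).factorization p =
        s + 1 + (∏ r ∈ Finset.range (s + 1), (l₀ + r * d)).factorization p := by
  set b := j₀ - 1 with hbdef
  have hb : b + 1 = j₀ := Nat.succ_pred_eq_of_pos hj₀pos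
  have hppos : 0 < p := hp.pos
  have hpd' : ¬ p ∣ d := fun h => absurd (Nat.le_of_dvd (by omega) h) (by omega)
  have hcop : Nat.Coprime p d := (Nat.Prime.coprime_iff_not_dvd hp).mpr hpd'
  have hl₀pos : 0 < l₀ := by
    rcases Nat.eq_zero_or_pos l₀ with h | h
    · rw [h, Nat.mul_zero] at hl₀; omega
    · exact h
  -- obtain s
  have hdvd : p ∣ (j - j₀) * d := by
    have h1 : α + (j - 1) * d = (α + b * d) + (j - j₀) * d := by
      have h2 : b + (j - j₀) = j - 1 := by omega
      rw [add_assoc, ← Nat.add_mul, h2]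
    have := Nat.dvd_sub hjdiv hj₀div
    rw [h1] at this
    simpa using this
  have hdvd2 : p ∣ (j - j₀) := hcop.dvd_of_dvd_mul_right hdvd
  obtain ⟨s, hs⟩ := hdvd2
  refine ⟨s, by omega, ?_⟩
  have hjeq : j = b + 1 + p * s := by omega
  -- key identity
  have hkey : ∀ r : ℕ, α + (b + p * r) * d = p * (l₀ + r * d) := by
    intro r
    have : α + (b + p * r) * d = (α + b * d) + p * (r * d) := by ring
    rw [this, hl₀, ← Nat.mul_add]
  -- factorization of product is sum of factorizations
  have hfac : ∀ (n : ℕ) (f : ℕ → ℕ), (∀ i, 0 < f i) →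
      (∏ i ∈ Finset.range n, f i).factorization p
        = ∑ i ∈ Finset.range n, (f i).factorization p := by
    intro n f hfpos
    rw [Nat.factorization_prod (fun i _ => (hfpos i).ne')]
    simp [Finsupp.finset_sum_apply]
  have hpos1 : ∀ i : ℕ, 0 < α + i * d := fun i => Nat.add_pos_left (by omega) _
  have hpos2 : ∀ r : ℕ, 0 < l₀ + r * d := fun r => Nat.add_pos_left hl₀pos _
  rw [hfac j _ hpos1, hfac (s + 1) _ hpos2]
  -- the image of r ↦ b + p*r
  set g : ℕ → ℕ := fun r => b + p * r with hg
  set T : Finset ℕ := (Finset.range (s + 1)).image g with hT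
  have hsub : T ⊆ Finset.range j := by
    intro x hx
    simp only [hT, Finset.mem_image, Finset.mem_range] at hx ⊢
    obtain ⟨r, hr, rfl⟩ := hx
    have : p * r ≤ p * s := Nat.mul_le_mul_left p (by omega)
    simp only [hg]
    omega
  have hzero : ∀ x ∈ Finset.range j, x ∉ T → (α + x * d).factorization p = 0 := by
    intro x hx hxT
    apply Nat.factorization_eq_zero_of_not_dvd
    intro hdvdx
    apply hxT
    have hbx : b ≤ x := by
      have := hj₀min (x + 1) (by omega) (by simpa using hdvdx)
      omega
    have hdx : p ∣ (x - b) * d := by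
      have h1 : α + x * d = (α + b * d) + (x - b) * d := by
        have h2 : b + (x - b) = x := by omega
        rw [add_assoc, ← Nat.add_mul, h2]
      have := Nat.dvd_sub hdvdx hj₀div
      rw [h1] at this
      simpa using this
    obtain ⟨r, hr⟩ := hcop.dvd_of_dvd_mul_right hdx
    simp only [hT, Finset.mem_image, Finset.mem_range]
    refine ⟨r, ?_, ?_⟩
    · simp only [Finset.mem_range] at hx
      have hxlt : x < b + 1 + p * s := by omega
      by_contra hc
      have h2 : s + 1 ≤ r := by omega
      have h3 : p * (s + 1) ≤ p * r := Nat.mul_le_mul_left p h2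
      rw [Nat.mul_succ] at h3
      omega
    · simp only [hg]; omega
  rw [← Finset.sum_subset hsub hzero, hT, Finset.sum_image
    (by intro a _ b' _ hab; simp only [hg] at hab; exact Nat.eq_of_mul_eq_mul_left hppos (by omega))]
  have hterm : ∀ r ∈ Finset.range (s + 1),
      (α + g r * d).factorization p = 1 + (l₀ + r * d).factorization p := by
    intro r _
    simp only [hg]
    rw [hkey r, Nat.factorization_mul hppos.ne' (hpos2 r).ne']
    simp [hp.factorization_self]
  rw [Finset.sum_congr rfl hterm, Finset.sum_add_distrib]
  simp [add_comm, mul_comm]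
end

section
/- For k > 400, the inequality (138·4·e·2)^k < (138·4k)^{π(4k)} fails; more precisely, using the bound π(4k) ≤ (4k/log(4k))(1 + 1.2762/log(4k)), the inequality log(138·8·e) < (4·log(138·4k)/log(4k))·(1 + 1.2762/log(4k)) fails for all integers k ≥ 401. -/
theorem stmt_14 (k : ℕ) (hk : 401 ≤ k) :
    ¬ (Real.log (138 * 8 * Real.exp 1) <
        4 * Real.log (138 * (4 * (k : ℝ))) / Real.log (4 * (k : ℝ)) *
          (1 + 1.2762 / Real.log (4 * (k : ℝ)))) := by
  rw [not_lt]
  have hk' : (1604 : ℝ) ≤ 4 * (k : ℝ) := by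
    have : (401 : ℝ) ≤ (k : ℝ) := by exact_mod_cast hk
    linarith
  have hx : (0 : ℝ) < 4 * (k : ℝ) := by linarith
  set L := Real.log (4 * (k : ℝ)) with hLdef
  have hl2 : (0.6931471803 : ℝ) < Real.log 2 := Real.log_two_gt_d9
  have hl2' : Real.log 2 < 0.6931471808 := Real.log_two_lt_d9
  -- lower bound on L : 74 * log 2 ≤ 7 * L
  have hL7 : 74 * Real.log 2 ≤ 7 * L := by
    have h1 : ((2 : ℝ) ^ 74) ≤ (4 * (k : ℝ)) ^ 7 := by
      calc ((2:ℝ) ^ 74) ≤ (1604:ℝ)^7 := by norm_num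
        _ ≤ (4 * (k : ℝ)) ^ 7 := by
            apply pow_le_pow_left₀ (by norm_num) hk'
    have h2 := Real.log_le_log (by positivity) h1
    rwa [Real.log_pow, Real.log_pow] at h2
  have hL0 : (7.327555 : ℝ) ≤ L := by nlinarith
  have hLpos : (0 : ℝ) < L := by linarith
  -- upper bound on log 138 : 5 * log 138 ≤ 36 * log 2
  have h138 : Real.log 138 ≤ 4.990660 := by
    have h1 : ((138 : ℝ) ^ 5) ≤ (2 : ℝ) ^ 36 := by norm_num
    have h2 := Real.log_le_log (by positivity) h1
    rw [Real.log_pow, Real.log_pow] at h2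
    push_cast at h2
    nlinarith
  -- lower bound on log 1104
  have h1104 : (6.931471803 : ℝ) ≤ Real.log 1104 := by
    have h1 : ((2 : ℝ) ^ 10) ≤ 1104 := by norm_num
    have h2 := Real.log_le_log (by positivity) h1
    rw [Real.log_pow] at h2
    push_cast at h2
    nlinarith
  have hlhs : Real.log (138 * 8 * Real.exp 1) = Real.log 1104 + 1 := by
    rw [Real.log_mul (by norm_num) (Real.exp_ne_zero 1), Real.log_exp]
    norm_num
  have hsplit : Real.log (138 * (4 * (k : ℝ))) = Real.log 138 + L := by
    rw [Real.log_mul (by norm_num) (ne_of_gt hx)]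
  rw [hlhs, hsplit]
  have key : 4 * (Real.log 138 + L) / L * (1 + 1.2762 / L)
      = 4 * (Real.log 138 + L) * (L + 1.2762) / (L * L) := by
    field_simp
  rw [key, div_le_iff₀ (by positivity)]
  nlinarith [sq_nonneg (L - 7.327555), h138, hL0, h1104]
end

section
/- Let α ∈ {1,3}, n ≥ 1, and let k with 1 ≤ k ≤ n/2. Suppose there exists a prime p with p > 4, p ≥ min(2k, 12), such that p divides ∏_{j=1}^{k}(α + (n-j)·4) but p does not divide ∏_{j=1}^{k}(α + (j-1)·4). Let a_0, ..., a_n be integers with a_n ≠ 0, a_0 ≠ 0, and all prime factors of |a_0·a_n| at most 2. Then the polynomial G(x) = a_n x^n + Σ_{j=0}^{n-1} a_j (∏_{i=j}^{n-1}(α + 4i)) x^j has no factor of degree k in ℤ[x]. -/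
open Polynomial

/-- Sum of p-adic valuations of β, β+4, ..., β+4(y-1). -/
def Spart (p β y : ℕ) : ℕ := ∑ i ∈ Finset.range y, padicValNat p (β + 4*i)

lemma resid {p β : ℕ} (hp : p.Prime) (hp4 : 4 < p) (hβ : β = 1 ∨ β = 3) :
    ∃ q m : ℕ, q < p ∧ (m = 1 ∨ m = 3) ∧ β + 4*q = m*p ∧
      (∀ i : ℕ, p ∣ (β + 4*i) ↔ ∃ s, i = q + s*p) := by
  haveI : Fact p.Prime := ⟨hp⟩
  have hpd4 : ¬ (p ∣ 4) := fun h => absurd (Nat.le_of_dvd (by norm_num) h) (by omega)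
  have h4 : (4 : ZMod p) ≠ 0 := by
    intro h
    apply hpd4
    have : ((4:ℕ) : ZMod p) = 0 := by exact_mod_cast h
    exact (ZMod.natCast_eq_zero_iff _ _).mp this
  set u : ZMod p := -(β : ZMod p) * (4 : ZMod p)⁻¹ with hu
  set q : ℕ := u.val with hqdef
  have hdvd : p ∣ β + 4 * q := by
    have : ((β + 4 * q : ℕ) : ZMod p) = 0 := by
      push_cast
      rw [hqdef, ZMod.natCast_val, ZMod.cast_id, hu]
      field_simp
      ring
    exact (ZMod.natCast_eq_zero_iff _ _).mp this
  have hqlt : q < p := u.val_lt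
  refine ⟨q, (β + 4*q)/p, hqlt, ?_, (Nat.div_mul_cancel hdvd).symm, ?_⟩
  · have heq : (β + 4*q)/p * p = β + 4 * q := Nat.div_mul_cancel hdvd
    have hml : β + 4 * q < 4 * p := by omega
    have hmg : 0 < β + 4 * q := by omega
    have hpodd : p % 2 = 1 := Nat.odd_iff.mp (hp.odd_of_ne_two (by omega))
    have hβodd : β % 2 = 1 := by omega
    set m := (β + 4*q)/p with hm
    have hm4 : m < 4 := by
      by_contra h
      push_neg at h
      nlinarith
    have hm0 : 1 ≤ m := by
      by_contra h
      push_neg at h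
      interval_cases m <;> omega
    have hmodd : (m * p) % 2 = 1 := by omega
    have : m % 2 = 1 := by
      rcases Nat.even_or_odd m with he | ho
      · exfalso
        have h2 : 2 ∣ m * p := Dvd.dvd.mul_right (even_iff_two_dvd.mp he) p
        omega
      · exact Nat.odd_iff.mp ho
    interval_cases m <;> omega
  · intro i
    constructor
    · intro hi
      have h1 : (p:ℤ) ∣ ((β : ℤ) + 4*i) := by exact_mod_cast Int.natCast_dvd_natCast.mpr hi
      have h2 : (p:ℤ) ∣ ((β : ℤ) + 4*q) := by exact_mod_cast Int.natCast_dvd_natCast.mpr hdvd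
      have h3 : (p : ℤ) ∣ 4 * ((i : ℤ) - q) := by
        have := dvd_sub h1 h2
        rw [show (4:ℤ) * ((i:ℤ) - q) = β + 4*i - (β + 4*q) by ring]
        exact this
      have hcop : IsCoprime (p:ℤ) 4 := by
        rw [Int.isCoprime_iff_gcd_eq_one]
        have hnc : Nat.Coprime p 4 := (Nat.Prime.coprime_iff_not_dvd hp).mpr hpd4
        have : ((4:ℕ):ℤ) = (4:ℤ) := by norm_num
        rw [← this, Int.gcd_natCast_natCast]
        exact hnc
      have hpdq : (p : ℤ) ∣ ((i : ℤ) - q) := hcop.dvd_of_dvd_mul_left h3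
      have hge : q ≤ i := by
        by_contra hlt
        push_neg at hlt
        have h0 : (0 : ℤ) < (q : ℤ) - i := by
          have : (i:ℤ) < (q:ℤ) := by exact_mod_cast hlt
          omega
        have hneg : (p : ℤ) ∣ ((q : ℤ) - i) := by
          have := hpdq.neg_right
          simpa using this
        have := Int.le_of_dvd h0 hneg
        omega
      obtain ⟨s, hs⟩ := hpdq
      have hs0 : 0 ≤ s := by
        rcases le_or_gt 0 s with h | h
        · exact h
        · exfalso
          have hip : (i:ℤ) - q < 0 := by
            rw [hs]
            have hp0 : (0:ℤ) < p := by exact_mod_cast Nat.lt_of_lt_of_le (by norm_num) (le_of_lt hp4)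
            nlinarith
          have : (q:ℤ) ≤ i := by exact_mod_cast hge
          omega
      refine ⟨s.toNat, ?_⟩
      have hiq : (i : ℤ) = q + s * p := by
        have : (i:ℤ) - q = p * s := hs
        linarith
      have hst : (s.toNat : ℤ) = s := Int.toNat_of_nonneg hs0
      have : (i : ℤ) = (q + s.toNat * p : ℕ) := by push_cast [hst]; linarith [hiq]
      exact_mod_cast this
    · rintro ⟨s, rfl⟩
      have : β + 4*(q + s*p) = (β + 4*q) + (4*s)*p := by ring
      rw [this]
      exact Nat.dvd_add hdvd (dvd_mul_left p (4*s))

lemma spart_rec {p β q m : ℕ} (hp : p.Prime) (hp4 : 4 < p)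
    (hch : ∀ i : ℕ, p ∣ (β + 4*i) ↔ ∃ s, i = q + s*p)
    (heq : β + 4*q = m*p) (hm : m = 1 ∨ m = 3) (y : ℕ) :
    ∃ N, Spart p β y = N + Spart p m N ∧ (∀ s : ℕ, s < N ↔ q + s*p < y) := by
  haveI : Fact p.Prime := ⟨hp⟩
  set N : ℕ := if q < y then (y - q - 1)/p + 1 else 0 with hN
  have hp0 : 0 < p := by omega
  have hchar : ∀ s : ℕ, s < N ↔ q + s*p < y := by
    intro s
    rw [hN]
    split_ifs with h
    · constructor
      · intro hs
        have hs' : s ≤ (y - q - 1)/p := by omega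
        have := (Nat.le_div_iff_mul_le hp0).mp hs'
        omega
      · intro hs
        have : s * p ≤ y - q - 1 := by omega
        have := (Nat.le_div_iff_mul_le hp0).mpr this
        omega
    · constructor
      · omega
      · intro hs
        exfalso
        nlinarith
  refine ⟨N, ?_, hchar⟩
  have hsub : ((Finset.range N).image (fun s => q + s*p)) ⊆ Finset.range y := by
    intro i hi
    simp only [Finset.mem_image, Finset.mem_range] at hi ⊢
    obtain ⟨s, hs, rfl⟩ := hi
    exact (hchar s).mp hs
  have hinj : Set.InjOn (fun s => q + s*p) (Finset.range N) := by
    intro s1 _ s2 _ h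
    simp only at h
    have : s1 * p = s2 * p := by omega
    exact Nat.eq_of_mul_eq_mul_right hp0 this
  have hzero : ∀ i ∈ Finset.range y, i ∉ (Finset.range N).image (fun s => q + s*p) →
      padicValNat p (β + 4*i) = 0 := by
    intro i hi hni
    apply padicValNat.eq_zero_of_not_dvd
    intro hdvd
    obtain ⟨s, rfl⟩ := (hch i).mp hdvd
    apply hni
    simp only [Finset.mem_image, Finset.mem_range]
    exact ⟨s, (hchar s).mpr (Finset.mem_range.mp hi), rfl⟩
  have h1 : Spart p β y = ∑ i ∈ (Finset.range N).image (fun s => q + s*p),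
      padicValNat p (β + 4*i) := by
    rw [Spart]
    exact (Finset.sum_subset hsub hzero).symm
  rw [h1, Finset.sum_image hinj]
  have h2 : ∀ s ∈ Finset.range N, padicValNat p (β + 4*(q + s*p)) = 1 + padicValNat p (m + 4*s) := by
    intro s _
    have he : β + 4*(q + s*p) = p * (m + 4*s) := by
      have : β + 4*(q+s*p) = (β + 4*q) + 4*s*p := by ring
      rw [this, heq]
      ring
    rw [he, padicValNat.mul (by omega) (by omega), padicValNat_self]
  rw [Finset.sum_congr rfl h2, Finset.sum_add_distrib, Finset.sum_const, Finset.card_range,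
    smul_eq_mul, mul_one, Spart]

lemma inner_bound {p : ℕ} (hp : p.Prime) (hp4 : 4 < p) :
    ∀ y : ℕ, ∀ β : ℕ, (β = 1 ∨ β = 3) → 1 ≤ y → (p/4) * Spart p β y < y := by
  intro y
  induction y using Nat.strong_induction_on with
  | _ y IH =>
    intro β hβ hy
    obtain ⟨q, m, hqlt, hm, heq, hch⟩ := resid hp hp4 hβ
    obtain ⟨N, hS, hchar⟩ := spart_rec hp hp4 hch heq hm y
    set Q := p/4 with hQ
    have hQ1 : 1 ≤ Q := by
      rw [hQ]; omega
    have hQp : 4*Q ≤ p ∧ p < 4*Q + 4 := by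
      rw [hQ]
      omega
    have hqQ : Q ≤ q := by
      -- 4*q + 3 ≥ m*p ≥ p
      have h1 : p ≤ m*p := Nat.le_mul_of_pos_left p (by omega)
      have h2 : p ≤ β + 4*q := heq ▸ h1
      have hpodd : p % 2 = 1 := Nat.odd_iff.mp (hp.odd_of_ne_two (by omega))
      omega
    rcases Nat.eq_zero_or_pos N with hN0 | hN1
    · rw [hS, hN0]
      simp only [Spart, Finset.range_zero, Finset.sum_empty, add_zero, mul_zero]
      omega
    · obtain ⟨A, rfl⟩ : ∃ A, N = A + 1 := ⟨N-1, by omega⟩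
      have hNy : q + A*p < y := (hchar A).mp (by omega)
      have hNlt : A + 1 < y := by nlinarith
      have hIH : Q * Spart p m (A+1) < A + 1 := IH (A+1) hNlt m hm hN1
      rw [hS, Nat.mul_add]
      have key : A * (Q+1) ≤ A * p := Nat.mul_le_mul_left _ (by omega)
      nlinarith [hNy, hIH, hqQ, key]

lemma outer_bound {p α k : ℕ} (hp : p.Prime) (hp4 : 4 < p) (hα : α = 1 ∨ α = 3)
    (hk : 1 ≤ k) (hpmin : min (2*k) 12 ≤ p) (hnd : ∀ i, i < k → ¬ p ∣ (α + 4*i)) :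
    ∀ y : ℕ, 1 ≤ y → k * Spart p α y < y := by
  obtain ⟨q, m, hqlt, hm, heq, hch⟩ := resid hp hp4 hα
  have hqk : k ≤ q := by
    by_contra h
    push_neg at h
    exact hnd q h ((hch q).mpr ⟨0, by ring⟩)
  set Q := p/4 with hQ
  have hQ1 : 1 ≤ Q := by rw [hQ]; omega
  have hQp : 4*Q ≤ p := by rw [hQ]; omega
  have hkey : k * (Q + 1) ≤ p * Q := by
    rcases le_or_gt (2*k) p with h2k | h2k
    · -- 2k ≤ p
      have h1 : (2*k)*(Q+1) ≤ p*(Q+1) := Nat.mul_le_mul_right _ h2k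
      have h2 : p*1 ≤ p*Q := Nat.mul_le_mul_left _ hQ1
      nlinarith [h1, h2]
    · -- p < 2k, so 12 ≤ p and Q ≥ 3, and 4k ≤ 3p - 1
      have hp12 : 12 ≤ p := by omega
      have hQ3 : 3 ≤ Q := by
        rw [hQ]; omega
      have h4k : 4*k + 1 ≤ 3*p := by
        have h1 : m * p ≤ 3 * p := Nat.mul_le_mul_right _ (by omega)
        have hpodd : p % 2 = 1 := Nat.odd_iff.mp (hp.odd_of_ne_two (by omega))
        have hα1 : 1 ≤ α := by omega
        omega
      have hz : (4*k + 1 : ℤ) ≤ 3*p := by exact_mod_cast h4k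
      have hzQ : (3 : ℤ) ≤ Q := by exact_mod_cast hQ3
      have hzp : (5 : ℤ) ≤ p := by exact_mod_cast (by omega : 5 ≤ p)
      have goal : (k : ℤ)*(Q+1) ≤ p*Q := by nlinarith [mul_nonneg (by linarith : (0:ℤ) ≤ 3*(p:ℤ) - (4*k+1)) (by linarith : (0:ℤ) ≤ (Q:ℤ)), mul_nonneg (by linarith : (0:ℤ) ≤ (p:ℤ)) (by linarith : (0:ℤ) ≤ (Q:ℤ) - 3)]
      exact_mod_cast goal
  intro y hy
  obtain ⟨N, hS, hchar⟩ := spart_rec hp hp4 hch heq hm y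
  rcases Nat.eq_zero_or_pos N with hN0 | hN1
  · rw [hS, hN0]
    simp only [Spart, Finset.range_zero, Finset.sum_empty, add_zero, mul_zero]
    omega
  · obtain ⟨A, rfl⟩ : ∃ A, N = A + 1 := ⟨N-1, by omega⟩
    have hNy : q + A*p < y := (hchar A).mp (by omega)
    have hinner : Q * Spart p m (A+1) < A+1 := inner_bound hp hp4 (A+1) m hm hN1
    -- Q * (k * S) ≤ k*Q*N + k*(N-1) = Q*k + (N-1)*(k*(Q+1)) ≤ Q*k + (N-1)*p*Q ≤ Q*(y-1) < Q*y
    have h1 : Q * (k * Spart p α y) = k * (Q * (A+1)) + k * (Q * Spart p m (A+1)) := by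
      rw [hS]; ring
    have h2 : k * (Q * Spart p m (A+1)) ≤ k * A := Nat.mul_le_mul_left _ (by omega)
    have h3 : k * (Q*(A+1)) + k*A = Q*k + A*(k*(Q+1)) := by ring
    have h4 : A*(k*(Q+1)) ≤ A*(p*Q) := Nat.mul_le_mul_left _ hkey
    have h5 : Q*k + A*(p*Q) ≤ Q * (q + A*p) := by
      have e : Q*(q + A*p) = Q*q + A*(p*Q) := by ring
      rw [e]
      have : Q*k ≤ Q*q := Nat.mul_le_mul_left _ hqk
      omega
    have h6 : Q * (k * Spart p α y) < Q * y := by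
      calc Q * (k * Spart p α y) = k*(Q*(A+1)) + k*(Q*Spart p m (A+1)) := h1
      _ ≤ k*(Q*(A+1)) + k*A := by omega
      _ = Q*k + A*(k*(Q+1)) := h3
      _ ≤ Q*k + A*(p*Q) := by omega
      _ ≤ Q * (q + A*p) := h5
      _ < Q * y := by
        exact Nat.mul_lt_mul_of_le_of_lt (le_refl Q) hNy (by omega)
    exact Nat.lt_of_mul_lt_mul_left h6

lemma val_prod {p : ℕ} [hp : Fact p.Prime] (s : Finset ℕ) (f : ℕ → ℤ)
    (hf : ∀ i ∈ s, f i ≠ 0) :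
    padicValInt p (∏ i ∈ s, f i) = ∑ i ∈ s, padicValInt p (f i) := by
  induction s using Finset.cons_induction with
  | empty => simp [padicValInt]
  | cons a s ha IH =>
    rw [Finset.prod_cons, Finset.sum_cons]
    rw [padicValInt.mul (hf a (Finset.mem_cons_self a s)) (Finset.prod_ne_zero_iff.mpr
      (fun i hi => hf i (Finset.mem_cons_of_mem hi)))]
    rw [IH (fun i hi => hf i (Finset.mem_cons_of_mem hi))]

set_option maxHeartbeats 1000000 in
lemma exact_coeff_val {p k : ℕ} (hp : p.Prime) (hk : 1 ≤ k) (g h : Polynomial ℤ)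
    (hg : g ≠ 0) (hh : h ≠ 0) :
    ∃ i j, i ∈ g.support ∧ j ∈ h.support ∧
      (∀ i' ∈ g.support, k * padicValInt p (g.coeff i) + i ≤ k * padicValInt p (g.coeff i') + i') ∧
      (∀ j' ∈ h.support, k * padicValInt p (h.coeff j) + j ≤ k * padicValInt p (h.coeff j') + j') ∧
      (∀ i' ∈ g.support, k * padicValInt p (g.coeff i') + i' = k * padicValInt p (g.coeff i) + i → i' ≤ i) ∧
      (g*h).coeff (i+j) ≠ 0 ∧
      padicValInt p ((g*h).coeff (i+j)) = padicValInt p (g.coeff i) + padicValInt p (h.coeff j) := by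
  haveI : Fact p.Prime := ⟨hp⟩
  classical
  have hgsupp : g.support.Nonempty := Polynomial.nonempty_support_iff.mpr hg
  have hhsupp : h.support.Nonempty := Polynomial.nonempty_support_iff.mpr hh
  obtain ⟨i0, hi0mem, hi0eq⟩ := Finset.exists_mem_eq_inf' hgsupp
    (fun i' => k * padicValInt p (g.coeff i') + i')
  obtain ⟨j0, hj0mem, hj0eq⟩ := Finset.exists_mem_eq_inf' hhsupp
    (fun j' => k * padicValInt p (h.coeff j') + j')
  have hTg : (g.support.filter (fun i' => k * padicValInt p (g.coeff i') + i' =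
      g.support.inf' hgsupp (fun i' => k * padicValInt p (g.coeff i') + i'))).Nonempty :=
    ⟨i0, Finset.mem_filter.mpr ⟨hi0mem, hi0eq.symm⟩⟩
  have hTh : (h.support.filter (fun j' => k * padicValInt p (h.coeff j') + j' =
      h.support.inf' hhsupp (fun j' => k * padicValInt p (h.coeff j') + j'))).Nonempty :=
    ⟨j0, Finset.mem_filter.mpr ⟨hj0mem, hj0eq.symm⟩⟩
  set i := (g.support.filter (fun i' => k * padicValInt p (g.coeff i') + i' =
      g.support.inf' hgsupp (fun i' => k * padicValInt p (g.coeff i') + i'))).max' hTg with hidef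
  set j := (h.support.filter (fun j' => k * padicValInt p (h.coeff j') + j' =
      h.support.inf' hhsupp (fun j' => k * padicValInt p (h.coeff j') + j'))).max' hTh with hjdef
  have himem' := Finset.max'_mem _ hTg
  have hjmem' := Finset.max'_mem _ hTh
  rw [← hidef] at himem'
  rw [← hjdef] at hjmem'
  rw [Finset.mem_filter] at himem' hjmem'
  obtain ⟨hisupp, hiA⟩ := himem'
  obtain ⟨hjsupp, hjB⟩ := hjmem'
  have hgmin : ∀ i' ∈ g.support,
      k * padicValInt p (g.coeff i) + i ≤ k * padicValInt p (g.coeff i') + i' := by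
    intro i' hi'
    rw [hiA]
    exact Finset.inf'_le _ hi'
  have hhmin : ∀ j' ∈ h.support,
      k * padicValInt p (h.coeff j) + j ≤ k * padicValInt p (h.coeff j') + j' := by
    intro j' hj'
    rw [hjB]
    exact Finset.inf'_le _ hj'
  have hgmax : ∀ i' ∈ g.support,
      k * padicValInt p (g.coeff i') + i' = k * padicValInt p (g.coeff i) + i → i' ≤ i := by
    intro i' hi' he
    apply Finset.le_max'
    rw [Finset.mem_filter]
    exact ⟨hi', he.trans hiA⟩
  have hhmax : ∀ j' ∈ h.support,
      k * padicValInt p (h.coeff j') + j' = k * padicValInt p (h.coeff j) + j → j' ≤ j := by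
    intro j' hj' he
    apply Finset.le_max'
    rw [Finset.mem_filter]
    exact ⟨hj', he.trans hjB⟩
  have hgi0 : g.coeff i ≠ 0 := Polynomial.mem_support_iff.mp hisupp
  have hhj0 : h.coeff j ≠ 0 := Polynomial.mem_support_iff.mp hjsupp
  have hmain0 : g.coeff i * h.coeff j ≠ 0 := mul_ne_zero hgi0 hhj0
  have hmainval : padicValInt p (g.coeff i * h.coeff j)
      = padicValInt p (g.coeff i) + padicValInt p (h.coeff j) := padicValInt.mul hgi0 hhj0
  set V := padicValInt p (g.coeff i) + padicValInt p (h.coeff j) with hV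
  -- the rest of antidiagonal is divisible by p^(V+1)
  have hrest : (p : ℤ)^(V+1) ∣ ∑ x ∈ (Finset.HasAntidiagonal.antidiagonal (i+j)).erase (i, j),
      g.coeff x.1 * h.coeff x.2 := by
    apply Finset.dvd_sum
    rintro ⟨i', j'⟩ hx
    have hxd := Finset.mem_erase.mp hx
    have hsum : i' + j' = i + j := Finset.HasAntidiagonal.mem_antidiagonal.mp hxd.2
    rcases eq_or_ne (g.coeff i') 0 with h0 | hgi'
    · simp [h0]
    rcases eq_or_ne (h.coeff j') 0 with h0 | hhj'
    · simp [h0]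
    have hi'supp : i' ∈ g.support := Polynomial.mem_support_iff.mpr hgi'
    have hj'supp : j' ∈ h.support := Polynomial.mem_support_iff.mpr hhj'
    have hne : i' ≠ i ∨ j' ≠ j := by
      by_contra hcon
      push_neg at hcon
      exact hxd.1 (Prod.ext hcon.1 hcon.2)
    have hstrict : (k * padicValInt p (g.coeff i) + i) + (k * padicValInt p (h.coeff j) + j) + 1
        ≤ (k * padicValInt p (g.coeff i') + i') + (k * padicValInt p (h.coeff j') + j') := by
      rcases Nat.lt_trichotomy i' i with hlt | heq | hgt
      · have hj'gt : j < j' := by omega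
        have h1 := hgmin i' hi'supp
        have h2 := hhmin j' hj'supp
        have h3 : k * padicValInt p (h.coeff j') + j' ≠ k * padicValInt p (h.coeff j) + j := by
          intro he
          exact absurd (hhmax j' hj'supp he) (by omega)
        omega
      · exfalso
        have : j' = j := by omega
        rcases hne with hne | hne
        · exact hne heq
        · exact hne this
      · have h1 := hgmin i' hi'supp
        have h2 := hhmin j' hj'supp
        have h3 : k * padicValInt p (g.coeff i') + i' ≠ k * padicValInt p (g.coeff i) + i := by
          intro he
          exact absurd (hgmax i' hi'supp he) (by omega)
        omega
    have hval : V + 1 ≤ padicValInt p (g.coeff i' * h.coeff j') := by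
      rw [padicValInt.mul hgi' hhj']
      have hkineq : k * V + 1 ≤ k * (padicValInt p (g.coeff i') + padicValInt p (h.coeff j')) := by
        rw [hV]
        have e : k * (padicValInt p (g.coeff i') + padicValInt p (h.coeff j'))
            = k * padicValInt p (g.coeff i') + k * padicValInt p (h.coeff j') := by ring
        have e2 : k * (padicValInt p (g.coeff i) + padicValInt p (h.coeff j))
            = k * padicValInt p (g.coeff i) + k * padicValInt p (h.coeff j) := by ring
        omega
      by_contra hcon
      push_neg at hcon
      have : k * (padicValInt p (g.coeff i') + padicValInt p (h.coeff j')) ≤ k * V :=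
        Nat.mul_le_mul_left _ (by omega)
      omega
    exact (padicValInt_dvd_iff (V+1) (g.coeff i' * h.coeff j')).mpr (Or.inr hval)
  have hcoeff : (g*h).coeff (i+j) = g.coeff i * h.coeff j +
      ∑ x ∈ (Finset.HasAntidiagonal.antidiagonal (i+j)).erase (i, j), g.coeff x.1 * h.coeff x.2 := by
    rw [Polynomial.coeff_mul]
    exact (Finset.add_sum_erase (a := ((i, j) : ℕ × ℕ)) _
      (fun x : ℕ × ℕ => g.coeff x.1 * h.coeff x.2)
      (Finset.HasAntidiagonal.mem_antidiagonal.mpr rfl)).symm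
  have hmaindvd : (p : ℤ)^V ∣ g.coeff i * h.coeff j := by
    rw [padicValInt_dvd_iff]
    exact Or.inr (le_of_eq hmainval.symm)
  have hmainnotdvd : ¬ (p : ℤ)^(V+1) ∣ g.coeff i * h.coeff j := by
    rw [padicValInt_dvd_iff]
    push_neg
    refine ⟨hmain0, ?_⟩
    rw [hmainval]
    omega
  have hcne : (g*h).coeff (i+j) ≠ 0 := by
    intro hzero
    apply hmainnotdvd
    have he : g.coeff i * h.coeff j = -∑ x ∈ (Finset.HasAntidiagonal.antidiagonal (i+j)).erase (i, j),
        g.coeff x.1 * h.coeff x.2 := by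
      rw [hcoeff] at hzero
      linarith
    rw [he]
    exact dvd_neg.mpr hrest
  have hcval : padicValInt p ((g*h).coeff (i+j)) = V := by
    have hdvd : (p:ℤ)^V ∣ (g*h).coeff (i+j) := by
      rw [hcoeff]
      exact dvd_add hmaindvd ((pow_dvd_pow _ (by omega)).trans hrest)
    have hnotdvd : ¬ (p:ℤ)^(V+1) ∣ (g*h).coeff (i+j) := by
      intro hcon
      apply hmainnotdvd
      have he : g.coeff i * h.coeff j = (g*h).coeff (i+j)
          - ∑ x ∈ (Finset.HasAntidiagonal.antidiagonal (i+j)).erase (i, j), g.coeff x.1 * h.coeff x.2 := by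
        rw [hcoeff]; ring
      rw [he]
      exact dvd_sub hcon hrest
    have h1 := (padicValInt_dvd_iff V ((g*h).coeff (i+j))).mp hdvd
    have h2 : ¬ (V + 1 ≤ padicValInt p ((g*h).coeff (i+j))) := by
      intro hcon
      exact hnotdvd ((padicValInt_dvd_iff (V+1) _).mpr (Or.inr hcon))
    rcases h1 with h1 | h1
    · exact absurd h1 hcne
    · omega
  exact ⟨i, j, hisupp, hjsupp, hgmin, hhmin, hgmax, hcne, hcval⟩

set_option maxHeartbeats 1000000 in
open Polynomial in
theorem stmt_15 (α n k : ℕ) (hα : α = 1 ∨ α = 3) (hn : 1 ≤ n) (hk : 1 ≤ k)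
    (hkn : 2 * k ≤ n) (p : ℕ) (hp : p.Prime) (hp4 : p > 4) (hpmin : p ≥ min (2 * k) 12)
    (hdiv : p ∣ ∏ j ∈ Finset.Icc 1 k, (α + (n - j) * 4))
    (hndiv : ¬ p ∣ ∏ j ∈ Finset.Icc 1 k, (α + (j - 1) * 4))
    (a : ℕ → ℤ) (han : a n ≠ 0) (ha0 : a 0 ≠ 0)
    (ha : ∀ q : ℕ, q.Prime → (q : ℤ) ∣ a 0 * a n → q ≤ 2) :
    ¬ ∃ g : Polynomial ℤ,
        g ∣ (C (a n) * X ^ n +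
          ∑ j ∈ Finset.range n,
            C (a j * ∏ i ∈ Finset.Icc j (n - 1), ((α : ℤ) + 4 * i)) * X ^ j) ∧
        g.natDegree = k := by
  rintro ⟨g, hgdvd, hgdeg⟩
  haveI : Fact p.Prime := ⟨hp⟩
  set F : Polynomial ℤ := C (a n) * X ^ n + ∑ j ∈ Finset.range n,
      C (a j * ∏ i ∈ Finset.Icc j (n - 1), ((α : ℤ) + 4 * i)) * X ^ j with hFdef
  -- prime p does not divide a 0 or a n
  have hpan : ¬ (p:ℤ) ∣ a n := fun hd => absurd (ha p hp (Dvd.dvd.mul_left hd (a 0))) (by omega)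
  have hpa0 : ¬ (p:ℤ) ∣ a 0 := fun hd => absurd (ha p hp (Dvd.dvd.mul_right hd (a n))) (by omega)
  -- coefficients of F
  have hco : ∀ t, F.coeff t = (if t = n then a n else 0) +
      (if t < n then a t * ∏ i ∈ Finset.Icc t (n-1), ((α:ℤ) + 4*i) else 0) := by
    intro t
    rw [hFdef]
    rw [Polynomial.coeff_add, Polynomial.coeff_C_mul, Polynomial.coeff_X_pow,
      Polynomial.finset_sum_coeff]
    congr 1
    · split_ifs <;> simp
    · simp only [Polynomial.coeff_C_mul, Polynomial.coeff_X_pow, mul_ite, mul_one, mul_zero]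
      rw [Finset.sum_ite_eq (Finset.range n) t]
      simp [Finset.mem_range]
  have hprodpos : ∀ t, (0:ℤ) < ∏ i ∈ Finset.Icc t (n-1), ((α:ℤ) + 4*i) := by
    intro t
    apply Finset.prod_pos
    intro i _
    have h1 : (1:ℤ) ≤ (α:ℤ) := by exact_mod_cast (by omega : 1 ≤ α)
    have h2 : (0:ℤ) ≤ 4*(i:ℤ) := by positivity
    linarith
  have hcoeffn : F.coeff n = a n := by rw [hco]; simp
  have hcoefflt : ∀ t, t < n → F.coeff t = a t * ∏ i ∈ Finset.Icc t (n-1), ((α:ℤ) + 4*i) := by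
    intro t ht
    rw [hco]
    simp [ht, Nat.ne_of_lt ht]
  have hcoeffgt : ∀ t, n < t → F.coeff t = 0 := by
    intro t ht
    rw [hco]
    simp [Nat.ne_of_gt ht, Nat.not_lt_of_gt ht, le_of_lt]
  have hF0 : F ≠ 0 := by
    intro h0
    rw [h0] at hcoeffn
    simp at hcoeffn
    exact han hcoeffn.symm
  have hFdeg : F.natDegree = n := by
    apply le_antisymm
    · exact Polynomial.natDegree_le_iff_coeff_eq_zero.mpr (fun t ht => hcoeffgt t ht)
    · exact Polynomial.le_natDegree_of_ne_zero (hcoeffn ▸ han)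
  obtain ⟨h, hFgh⟩ := hgdvd
  have hg0 : g ≠ 0 := by
    intro h0
    rw [h0, zero_mul] at hFgh
    exact hF0 hFgh
  have hh0 : h ≠ 0 := by
    intro h0
    rw [h0, mul_zero] at hFgh
    exact hF0 hFgh
  have hdegs : k + h.natDegree = n := by
    have := Polynomial.natDegree_mul hg0 hh0
    rw [← hFgh, hFdeg, hgdeg] at this
    omega
  have hkn' : k ≤ n := by omega
  have hlead : g.coeff k * h.coeff h.natDegree = a n := by
    have := Polynomial.coeff_mul_degree_add_degree g h
    rw [hgdeg, hdegs, ← hFgh, hcoeffn] at this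
    rw [Polynomial.leadingCoeff, Polynomial.leadingCoeff, hgdeg] at this
    exact this.symm
  have hpgk : ¬ (p:ℤ) ∣ g.coeff k := by
    intro hd
    exact hpan (hlead ▸ Dvd.dvd.mul_right hd _)
  have hphk : ¬ (p:ℤ) ∣ h.coeff h.natDegree := by
    intro hd
    exact hpan (hlead ▸ Dvd.dvd.mul_left hd _)
  -- the index i₀ with p ∣ α + 4 i₀, n - k ≤ i₀ ≤ n - 1
  obtain ⟨j₀, hj₀mem, hj₀dvd⟩ := (Nat.Prime.prime hp).exists_mem_finset_dvd hdiv
  rw [Finset.mem_Icc] at hj₀mem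
  set i₀ := n - j₀ with hi₀def
  have hi₀dvd : p ∣ α + 4 * i₀ := by
    have : α + (n - j₀) * 4 = α + 4 * i₀ := by rw [hi₀def]; ring
    rwa [this] at hj₀dvd
  have hi₀range : n - k ≤ i₀ ∧ i₀ ≤ n - 1 := by omega
  -- Step 1 : p divides g.coeff 0
  have hpg0 : (p:ℤ) ∣ g.coeff 0 := by
    by_contra hcon
    set φ := Int.castRingHom (ZMod p) with hφ
    have hmapF : F.map φ = (g.map φ) * (h.map φ) := by rw [hFgh, Polynomial.map_mul]
    have hXF : (X : (ZMod p)[X])^(i₀+1) ∣ F.map φ := by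
      rw [Polynomial.X_pow_dvd_iff]
      intro d hd
      rw [Polynomial.coeff_map]
      have hdn : d < n := by omega
      rw [hcoefflt d hdn]
      have hpdvd : (p:ℤ) ∣ a d * ∏ i ∈ Finset.Icc d (n-1), ((α:ℤ) + 4*i) := by
        apply Dvd.dvd.mul_left
        have hmem : i₀ ∈ Finset.Icc d (n-1) := Finset.mem_Icc.mpr (by omega)
        have hfac : (p:ℤ) ∣ ((α:ℤ) + 4*(i₀:ℤ)) := by
          have := Int.natCast_dvd_natCast.mpr hi₀dvd
          push_cast at this
          convert this using 1
        exact hfac.trans (Finset.dvd_prod_of_mem _ hmem)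
      show ((a d * ∏ i ∈ Finset.Icc d (n-1), ((α:ℤ) + 4*i) : ℤ) : ZMod p) = 0
      exact (ZMod.intCast_zmod_eq_zero_iff_dvd _ p).mpr hpdvd
    have hXg : ¬ (X : (ZMod p)[X]) ∣ g.map φ := by
      rw [Polynomial.X_dvd_iff, Polynomial.coeff_map]
      intro h0
      exact hcon ((ZMod.intCast_zmod_eq_zero_iff_dvd _ p).mp h0)
    have hXh : (X : (ZMod p)[X])^(i₀+1) ∣ h.map φ := by
      apply (Polynomial.prime_X).pow_dvd_of_dvd_mul_left (i₀+1) hXg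
      rw [← hmapF]
      exact hXF
    have hhmap0 : h.map φ ≠ 0 := by
      intro h0
      have : (h.map φ).coeff h.natDegree = 0 := by rw [h0]; simp
      rw [Polynomial.coeff_map] at this
      exact hphk ((ZMod.intCast_zmod_eq_zero_iff_dvd _ p).mp this)
    have hle := Polynomial.natDegree_le_of_dvd hXh hhmap0
    rw [Polynomial.natDegree_X_pow] at hle
    have := Polynomial.natDegree_map_le (f := φ) (p := h)
    omega
  -- valuation bridges
  have hcast : ∀ t : ℕ, ((α:ℤ) + 4*(t:ℤ)) = ((α + 4*t : ℕ) : ℤ) := by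
    intro t; push_cast; ring
  have hvalprod : ∀ t, padicValInt p (∏ i ∈ Finset.Icc t (n-1), ((α:ℤ) + 4*i))
      = ∑ i ∈ Finset.Icc t (n-1), padicValNat p (α + 4*i) := by
    intro t
    rw [val_prod _ _ (fun i _ => by
      have h1 : (1:ℤ) ≤ (α:ℤ) := by exact_mod_cast (by omega : 1 ≤ α)
      have h2 : (0:ℤ) ≤ 4*(i:ℤ) := by positivity
      intro h0; linarith [h0.ge, h0.le])]
    apply Finset.sum_congr rfl
    intro i _
    rw [hcast i, padicValInt.of_nat]
  have hsplit : ∀ t, t ≤ n → Spart p α n = Spart p α t +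
      ∑ i ∈ Finset.Icc t (n-1), padicValNat p (α + 4*i) := by
    intro t ht
    have hIcc : Finset.Icc t (n-1) = Finset.Ico t n := by
      ext x; simp only [Finset.mem_Icc, Finset.mem_Ico]; omega
    rw [hIcc]
    simp only [Spart, Finset.range_eq_Ico]
    exact (Finset.sum_Ico_consecutive _ (by omega) (by omega)).symm
  have hval0 : padicValInt p (F.coeff 0) = Spart p α n := by
    rw [hcoefflt 0 hn, padicValInt.mul ha0 (ne_of_gt (hprodpos 0)), hvalprod 0,
      padicValInt.eq_zero_of_not_dvd hpa0, zero_add]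
    rw [hsplit 0 (by omega)]
    simp [Spart]
  have hF0ne : F.coeff 0 ≠ 0 := by
    rw [hcoefflt 0 hn]
    exact mul_ne_zero ha0 (ne_of_gt (hprodpos 0))
  -- outer bound
  have hnd' : ∀ i, i < k → ¬ p ∣ (α + 4*i) := by
    intro i hi hdvd
    apply hndiv
    have hmem : i + 1 ∈ Finset.Icc 1 k := Finset.mem_Icc.mpr (by omega)
    have he : α + (i+1-1)*4 = α + 4*i := by omega
    exact dvd_trans (he ▸ hdvd) (Finset.dvd_prod_of_mem _ hmem)
  have houter := outer_bound hp hp4 hα hk hpmin hnd'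
  -- the two maximal minimizers
  obtain ⟨i, j, hisupp, hjsupp, hgmin, hhmin, hgmax, hcne, hcval⟩ :=
    exact_coeff_val hp hk g h hg0 hh0
  rw [← hFgh] at hcne hcval
  have hik : i ≤ k := hgdeg ▸ Polynomial.le_natDegree_of_mem_supp i hisupp
  have hjk : j ≤ h.natDegree := Polynomial.le_natDegree_of_mem_supp j hjsupp
  have hijn : i + j ≤ n := by omega
  rcases Nat.eq_zero_or_pos (i + j) with hij0 | hij1
  · -- i = 0 case: contradiction via p ∣ g.coeff 0
    have hi0 : i = 0 := by omega
    subst hi0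
    have hg00 : g.coeff 0 ≠ 0 := Polynomial.mem_support_iff.mp hisupp
    have hν1 : 1 ≤ padicValInt p (g.coeff 0) := by
      have := (padicValInt_dvd_iff 1 (g.coeff 0)).mp (by simpa using hpg0)
      rcases this with h0 | h0
      · exact absurd h0 hg00
      · exact h0
    have hgk : k ∈ g.support := by
      rw [Polynomial.mem_support_iff]
      have : g.coeff g.natDegree ≠ 0 := Polynomial.leadingCoeff_ne_zero.mpr hg0
      rwa [hgdeg] at this
    have hmin := hgmin k hgk
    have hνgk : padicValInt p (g.coeff k) = 0 := padicValInt.eq_zero_of_not_dvd hpgk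
    rw [hνgk] at hmin
    -- k * ν(g₀) + 0 ≤ 0 + k, and ν(g₀) ≥ 1, so equality
    have hνg0 : padicValInt p (g.coeff 0) = 1 := by
      have : k * padicValInt p (g.coeff 0) ≤ k := by omega
      have h2 : k * 1 ≤ k * padicValInt p (g.coeff 0) := Nat.mul_le_mul_left _ hν1
      have h3 : k * padicValInt p (g.coeff 0) = k := by omega
      by_contra hne
      have : 2 ≤ padicValInt p (g.coeff 0) := by omega
      have := Nat.mul_le_mul_left k this
      omega
    have heq : k * padicValInt p (g.coeff k) + k = k * padicValInt p (g.coeff 0) + 0 := by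
      rw [hνgk, hνg0]
      omega
    have := hgmax k hgk heq
    omega
  · -- i + j ≥ 1 case
    set t := i + j with htdef
    -- lower bound : k * ν(F₀) ≥ (k ν(g_i) + i) + (k ν(h_j) + j)
    have hF00 : F.coeff 0 = g.coeff 0 * h.coeff 0 := by
      rw [hFgh]
      exact Polynomial.mul_coeff_zero g h
    have hg00 : g.coeff 0 ≠ 0 := fun h0 => hF0ne (by rw [hF00, h0, zero_mul])
    have hh00 : h.coeff 0 ≠ 0 := fun h0 => hF0ne (by rw [hF00, h0, mul_zero])
    have hg0supp : (0:ℕ) ∈ g.support := Polynomial.mem_support_iff.mpr hg00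
    have hh0supp : (0:ℕ) ∈ h.support := Polynomial.mem_support_iff.mpr hh00
    have hminG := hgmin 0 hg0supp
    have hminH := hhmin 0 hh0supp
    have hvalF0 : padicValInt p (F.coeff 0)
        = padicValInt p (g.coeff 0) + padicValInt p (h.coeff 0) := by
      rw [hF00, padicValInt.mul hg00 hh00]
    have hlow : k * padicValInt p (g.coeff i) + i + (k * padicValInt p (h.coeff j) + j)
        ≤ k * padicValInt p (F.coeff 0) := by
      have e : k * padicValInt p (F.coeff 0)
          = k * padicValInt p (g.coeff 0) + k * padicValInt p (h.coeff 0) := by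
        rw [hvalF0]; ring
      omega
    -- upper bound : k * ν(F₀) < k * ν(F_t) + t
    have hup : k * padicValInt p (F.coeff 0) < k * padicValInt p (F.coeff t) + t := by
      rcases Nat.lt_or_ge t n with htn | htn
      · -- t < n
        have hct := hcoefflt t htn
        have hat : a t ≠ 0 := by
          intro h0
          apply hcne
          rw [hct, h0, zero_mul]
        have hvalt : padicValInt p (F.coeff t)
            = padicValInt p (a t) + ∑ x ∈ Finset.Icc t (n-1), padicValNat p (α + 4*x) := by
          rw [hct, padicValInt.mul hat (ne_of_gt (hprodpos t)), hvalprod t]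
        have hsum := hsplit t (by omega)
        have hSt := houter t hij1
        have e1 : k * Spart p α n = k * Spart p α t
            + k * ∑ x ∈ Finset.Icc t (n-1), padicValNat p (α + 4*x) := by
          rw [hsum]; ring
        have e2 : k * padicValInt p (F.coeff t) = k * padicValInt p (a t)
            + k * ∑ x ∈ Finset.Icc t (n-1), padicValNat p (α + 4*x) := by
          rw [hvalt]; ring
        rw [hval0]
        omega
      · -- t = n
        have htn' : t = n := by omega
        rw [hval0]
        have := houter n hn
        omega
    rw [hcval] at hup
    have e3 : k * (padicValInt p (g.coeff i) + padicValInt p (h.coeff j))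
        = k * padicValInt p (g.coeff i) + k * padicValInt p (h.coeff j) := by ring
    omega
end

section
/- Let p be a prime, d ≥ 2 with p ≥ d+1, and let l₀, s be integers with 1 ≤ l₀ ≤ d-1 and s ≥ p. Then ord_p(l₀(l₀+d)(l₀+2d)···(l₀+sd)) ≤ ord_p(l₀ + r₀d) + ord_p(s!) ≤ log(l₀+sd)/log p + s/(p-1), where r₀ is an index with 0 ≤ r₀ ≤ s at which ord_p(l₀+rd) is maximal. -/
open Finset

theorem stmt_19 (p d l₀ s r₀ : ℕ) (hp : p.Prime) (hd : 2 ≤ d) (hpd : p ≥ d + 1)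
    (hl₀ : 1 ≤ l₀) (hl₀' : l₀ ≤ d - 1) (hs : s ≥ p) (hr₀ : r₀ ≤ s)
    (hmax : ∀ r : ℕ, r ≤ s →
      (l₀ + r * d).factorization p ≤ (l₀ + r₀ * d).factorization p) :
    (∏ r ∈ Finset.range (s + 1), (l₀ + r * d)).factorization p ≤
        (l₀ + r₀ * d).factorization p + (Nat.factorial s).factorization p ∧
      ((l₀ + r₀ * d).factorization p : ℝ) + ((Nat.factorial s).factorization p : ℝ) ≤
        Real.log ((l₀ : ℝ) + s * d) / Real.log p + (s : ℝ) / ((p : ℝ) - 1) := by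
  have hterm : ∀ r : ℕ, l₀ + r * d ≠ 0 := fun r => by positivity
  have hpd' : ¬ p ∣ d := by
    intro h
    have := Nat.le_of_dvd (by omega) h
    omega
  -- key pointwise bound
  have key : ∀ r ∈ (range (s + 1)).erase r₀,
      (l₀ + r * d).factorization p ≤ (Nat.dist r r₀).factorization p := by
    intro r hr
    rw [mem_erase, mem_range] at hr
    obtain ⟨hne, hrs⟩ := hr
    set k := (l₀ + r * d).factorization p with hk
    have h1 : p ^ k ∣ l₀ + r * d := Nat.ordProj_dvd _ _
    have h2 : p ^ k ∣ l₀ + r₀ * d := by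
      rw [hp.pow_dvd_iff_le_factorization (hterm r₀)]
      exact hmax r (by omega)
    have h3 : p ^ k ∣ Nat.dist r r₀ * d := by
      rcases le_total r r₀ with h | h
      · have : Nat.dist r r₀ * d = (l₀ + r₀ * d) - (l₀ + r * d) := by
          rw [Nat.dist_eq_sub_of_le h, Nat.sub_mul]
          have : r * d ≤ r₀ * d := Nat.mul_le_mul_right d h
          omega
        rw [this]
        exact Nat.dvd_sub h2 h1
      · have : Nat.dist r r₀ * d = (l₀ + r * d) - (l₀ + r₀ * d) := by
          rw [Nat.dist_eq_sub_of_le_right h, Nat.sub_mul]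
          have : r₀ * d ≤ r * d := Nat.mul_le_mul_right d h
          omega
        rw [this]
        exact Nat.dvd_sub h1 h2
    have hcop : Nat.Coprime p d := (Nat.Prime.coprime_iff_not_dvd hp).mpr hpd'
    have h4 : p ^ k ∣ Nat.dist r r₀ :=
      (Nat.Coprime.pow_left k hcop).dvd_of_dvd_mul_right h3
    have hdist : Nat.dist r r₀ ≠ 0 := fun h => hne (Nat.eq_of_dist_eq_zero h)
    exact (hp.pow_dvd_iff_le_factorization hdist).mp h4
  -- product of dists
  have hprod : ∏ r ∈ (range (s + 1)).erase r₀, Nat.dist r r₀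
      = r₀.factorial * (s - r₀).factorial := by
    have hsplit : (range (s + 1)).erase r₀ = range r₀ ∪ Ico (r₀ + 1) (s + 1) := by
      ext x
      simp only [mem_erase, mem_range, mem_union, mem_Ico]
      omega
    rw [hsplit, prod_union (by rw [disjoint_left]; intro x hx hx'; simp [mem_range, mem_Ico] at *; omega)]
    congr 1
    · rw [← Finset.prod_range_add_one_eq_factorial r₀]
      rw [← Finset.prod_range_reflect]
      apply Finset.prod_congr rfl
      intro x hx
      rw [mem_range] at hx
      rw [Nat.dist_eq_sub_of_le (by omega)]
      omega
    · rw [← Finset.prod_range_add_one_eq_factorial (s - r₀),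
        Finset.prod_Ico_eq_prod_range]
      apply Finset.prod_congr (by congr 1; omega)
      intro x hx
      rw [Nat.dist_eq_sub_of_le_right (by omega)]
      omega
  have hfacdvd : r₀.factorial * (s - r₀).factorial ∣ s.factorial :=
    Nat.factorial_mul_factorial_dvd_factorial hr₀
  -- part 1
  have part1 : (∏ r ∈ Finset.range (s + 1), (l₀ + r * d)).factorization p ≤
      (l₀ + r₀ * d).factorization p + (Nat.factorial s).factorization p := by
    have heq : (∏ r ∈ Finset.range (s + 1), (l₀ + r * d)).factorization p
        = ∑ r ∈ range (s + 1), (l₀ + r * d).factorization p := by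
      rw [Nat.factorization_prod (fun r _ => hterm r)]
      simp [Finset.sum_apply']
    rw [heq, ← Finset.add_sum_erase _ _ (by simp [mem_range]; omega : r₀ ∈ range (s + 1))]
    gcongr
    calc ∑ r ∈ (range (s + 1)).erase r₀, (l₀ + r * d).factorization p
        ≤ ∑ r ∈ (range (s + 1)).erase r₀, (Nat.dist r r₀).factorization p :=
          Finset.sum_le_sum key
      _ = (∏ r ∈ (range (s + 1)).erase r₀, Nat.dist r r₀).factorization p := by
          rw [Nat.factorization_prod (fun r hr => fun h => (by
            rw [mem_erase] at hr; exact hr.1 (Nat.eq_of_dist_eq_zero h)))]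
          simp [Finset.sum_apply']
      _ ≤ (Nat.factorial s).factorization p := by
          have hdvd : (∏ r ∈ (range (s + 1)).erase r₀, Nat.dist r r₀) ∣ s.factorial := by
            rw [hprod]; exact hfacdvd
          have hne0 : (∏ r ∈ (range (s + 1)).erase r₀, Nat.dist r r₀) ≠ 0 := by
            rw [hprod]; positivity
          exact (Nat.factorization_le_iff_dvd hne0 (Nat.factorial_ne_zero s)).mpr hdvd p
  refine ⟨part1, ?_⟩
  -- part 2
  have hp1 : (1 : ℝ) < p := by exact_mod_cast hp.one_lt
  have hlogp : 0 < Real.log p := Real.log_pos hp1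
  have h2a : ((l₀ + r₀ * d).factorization p : ℝ) ≤ Real.log ((l₀ : ℝ) + s * d) / Real.log p := by
    rw [le_div_iff₀ hlogp]
    have hle : (p : ℝ) ^ ((l₀ + r₀ * d).factorization p) ≤ (l₀ : ℝ) + s * d := by
      have h1 : p ^ ((l₀ + r₀ * d).factorization p) ≤ l₀ + r₀ * d :=
        Nat.le_of_dvd (by omega) (Nat.ordProj_dvd _ _)
      have h2 : l₀ + r₀ * d ≤ l₀ + s * d := by
        have := Nat.mul_le_mul_right d hr₀; omega
      push_cast
      exact_mod_cast h1.trans h2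
    calc ((l₀ + r₀ * d).factorization p : ℝ) * Real.log p
        = Real.log ((p : ℝ) ^ ((l₀ + r₀ * d).factorization p)) := by
          rw [Real.log_pow]
      _ ≤ Real.log ((l₀ : ℝ) + s * d) :=
          Real.log_le_log (by positivity) hle
  have h2b : ((Nat.factorial s).factorization p : ℝ) ≤ (s : ℝ) / ((p : ℝ) - 1) := by
    have : Fact p.Prime := ⟨hp⟩
    have hfac : (Nat.factorial s).factorization p = padicValNat p (Nat.factorial s) :=
      Nat.factorization_def _ hp
    have hleg : (p - 1) * padicValNat p (Nat.factorial s) ≤ s := by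
      rw [sub_one_mul_padicValNat_factorial s]; omega
    have hppos : (0 : ℝ) < (p : ℝ) - 1 := by
      have := hp.two_le
      have : (2 : ℝ) ≤ (p : ℝ) := by exact_mod_cast this
      linarith
    rw [hfac, le_div_iff₀ hppos]
    calc (padicValNat p (Nat.factorial s) : ℝ) * ((p : ℝ) - 1)
        = (((p - 1) * padicValNat p (Nat.factorial s) : ℕ) : ℝ) := by
          rw [Nat.cast_mul, Nat.cast_sub hp.one_lt.le]; push_cast; ring
      _ ≤ (s : ℝ) := by exact_mod_cast hleg
  exact add_le_add h2a h2b
end
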